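/- For each integer l ≥ 0, the polynomial ψ*_l(y) = (1/√(l!)) Σ_{j=0}^{⌊l/4⌋} (1/j!) D_y^{4j} y^l satisfies B* ψ*_l = -(l/4) ψ*_l, where B* = -D_y⁴ - (1/4) y D_y. -/

import Mathlib

lemma deriv_monomial (C : ℝ) (m : ℕ) :
    deriv (fun w : ℝ => C * w ^ m) = fun w => C * m * w ^ (m - 1) := by
  funext w
  rw [deriv_const_mul _ (differentiableAt_pow m), deriv_pow_field]
  ring

lemma deriv_sum_monomial (s : Finset ℕ) (a : ℕ → ℝ) (e : ℕ → ℕ) :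
    deriv (fun z : ℝ => ∑ j ∈ s, a j * z ^ e j)
      = fun z => ∑ j ∈ s, a j * (e j) * z ^ (e j - 1) := by
  funext z
  rw [deriv_fun_sum (fun j _ => (differentiableAt_pow (e j)).const_mul (a j))]
  exact Finset.sum_congr rfl fun j _ => congrFun (deriv_monomial (a j) (e j)) z

lemma iter_deriv_sum_monomial (k : ℕ) (s : Finset ℕ) (a : ℕ → ℝ) (e : ℕ → ℕ) :
    deriv^[k] (fun z : ℝ => ∑ j ∈ s, a j * z ^ e j)
      = fun z => ∑ j ∈ s, a j * ((e j).descFactorial k : ℝ) * z ^ (e j - k) := by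
  induction k with
  | zero => funext z; simp
  | succ k ih =>
    rw [Function.iterate_succ_apply', ih,
      deriv_sum_monomial s (fun j => a j * ((e j).descFactorial k : ℝ)) (fun j => e j - k)]
    funext z
    refine Finset.sum_congr rfl fun j _ => ?_
    rw [Nat.descFactorial_succ, Nat.sub_sub]
    push_cast
    ring

lemma iterDerivPowAux (l k : ℕ) :
    deriv^[k] (fun w : ℝ => w ^ l) = fun w => (l.descFactorial k : ℝ) * w ^ (l - k) := by
  induction k with
  | zero => funext w; simp
  | succ k ih =>
    rw [Function.iterate_succ_apply', ih, deriv_monomial ((l.descFactorial k : ℝ)) (l - k)]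
    funext w
    rw [Nat.descFactorial_succ, Nat.sub_sub]
    push_cast
    ring

lemma masterAux (l k : ℕ) (c : ℝ) :
    deriv^[k] (fun z : ℝ => c * ∑ j ∈ Finset.range (l / 4 + 1),
        (1 / (Nat.factorial j : ℝ)) * deriv^[4 * j] (fun w : ℝ => w ^ l) z)
      = fun z => ∑ j ∈ Finset.range (l / 4 + 1),
          (c * (1 / (Nat.factorial j : ℝ)) * (l.descFactorial (4 * j) : ℝ)) *
            ((l - 4 * j).descFactorial k : ℝ) * z ^ (l - 4 * j - k) := by
  have h1 : (fun z : ℝ => c * ∑ j ∈ Finset.range (l / 4 + 1),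
        (1 / (Nat.factorial j : ℝ)) * deriv^[4 * j] (fun w : ℝ => w ^ l) z)
      = fun z => ∑ j ∈ Finset.range (l / 4 + 1),
          (c * (1 / (Nat.factorial j : ℝ)) * (l.descFactorial (4 * j) : ℝ)) * z ^ (l - 4 * j) := by
    funext z
    rw [Finset.mul_sum]
    refine Finset.sum_congr rfl fun j _ => ?_
    rw [congrFun (iterDerivPowAux l (4 * j)) z]
    ring
  rw [h1]
  exact iter_deriv_sum_monomial k _ _ _

lemma descF_mul (l j : ℕ) :
    l.descFactorial (4 * j) * (l - 4 * j).descFactorial 4 = l.descFactorial (4 * (j + 1)) := by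
  rw [show 4 * (j + 1) = 4 * j + 1 + 1 + 1 + 1 by ring]
  simp [Nat.descFactorial, Nat.sub_sub]
  ring

/-- the polynomials ψ*_l are eigenfunctions of the adjoint operator
B* g = -g⁗ - (1/4) y g' with eigenvalues -l/4. -/
theorem adjoint_polynomial_eigenfunctions (l : ℕ) :
    ∀ y : ℝ,
      (- deriv^[4] (fun z => (1 / Real.sqrt (Nat.factorial l)) *
            ∑ j ∈ Finset.range (l / 4 + 1),
              (1 / (Nat.factorial j : ℝ)) * deriv^[4 * j] (fun w : ℝ => w ^ l) z) y
        - (1 / 4) * y *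
          deriv (fun z => (1 / Real.sqrt (Nat.factorial l)) *
            ∑ j ∈ Finset.range (l / 4 + 1),
              (1 / (Nat.factorial j : ℝ)) * deriv^[4 * j] (fun w : ℝ => w ^ l) z) y)
      = -((l : ℝ) / 4) *
          ((1 / Real.sqrt (Nat.factorial l)) *
            ∑ j ∈ Finset.range (l / 4 + 1),
              (1 / (Nat.factorial j : ℝ)) * deriv^[4 * j] (fun w : ℝ => w ^ l) y) := by
  intro y
  set c : ℝ := 1 / Real.sqrt (Nat.factorial l) with hc
  have h4 := congrFun (masterAux l 4 c) y
  have h1 : deriv (fun z => c *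
        ∑ j ∈ Finset.range (l / 4 + 1),
          (1 / (Nat.factorial j : ℝ)) * deriv^[4 * j] (fun w : ℝ => w ^ l) z) y
      = ∑ j ∈ Finset.range (l / 4 + 1),
          (c * (1 / (Nat.factorial j : ℝ)) * (l.descFactorial (4 * j) : ℝ)) *
            ((l - 4 * j).descFactorial 1 : ℝ) * y ^ (l - 4 * j - 1) :=
    congrFun (masterAux l 1 c) y
  have h0 : (c * ∑ j ∈ Finset.range (l / 4 + 1),
          (1 / (Nat.factorial j : ℝ)) * deriv^[4 * j] (fun w : ℝ => w ^ l) y)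
      = ∑ j ∈ Finset.range (l / 4 + 1),
          (c * (1 / (Nat.factorial j : ℝ)) * (l.descFactorial (4 * j) : ℝ)) *
            ((l - 4 * j).descFactorial 0 : ℝ) * y ^ (l - 4 * j - 0) :=
    congrFun (masterAux l 0 c) y
  rw [h4, h1, h0]
  simp only [Nat.descFactorial_zero, Nat.descFactorial_one, Nat.cast_one, mul_one, Nat.sub_zero]
  have hshift : ∑ j ∈ Finset.range (l / 4 + 1),
        (c * (1 / (Nat.factorial j : ℝ)) * (l.descFactorial (4 * j) : ℝ)) *
          ((l - 4 * j).descFactorial 4 : ℝ) * y ^ (l - 4 * j - 4)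
      = ∑ j ∈ Finset.range (l / 4 + 1),
          (j : ℝ) * ((c * (1 / (Nat.factorial j : ℝ)) * (l.descFactorial (4 * j) : ℝ)) *
            y ^ (l - 4 * j)) := by
    rw [Finset.sum_range_succ, Finset.sum_range_succ']
    have hz : (l - 4 * (l / 4)).descFactorial 4 = 0 :=
      Nat.descFactorial_eq_zero_iff_lt.mpr (by omega)
    rw [hz]
    simp only [Nat.cast_zero, mul_zero, zero_mul, add_zero, zero_add]
    refine Finset.sum_congr rfl fun j hj => ?_
    have hd := descF_mul l j
    have hfac : (((j + 1).factorial : ℕ) : ℝ) = ((j : ℝ) + 1) * (j.factorial : ℝ) := by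
      push_cast [Nat.factorial_succ]; ring
    rw [show l - 4 * j - 4 = l - 4 * (j + 1) from by omega, ← hd]
    push_cast [hfac]
    have hjf : ((j.factorial : ℕ) : ℝ) ≠ 0 := Nat.cast_ne_zero.mpr (Nat.factorial_ne_zero j)
    field_simp
  have hy : (1 / 4 : ℝ) * y * ∑ j ∈ Finset.range (l / 4 + 1),
        (c * (1 / (Nat.factorial j : ℝ)) * (l.descFactorial (4 * j) : ℝ)) *
          ((l - 4 * j : ℕ) : ℝ) * y ^ (l - 4 * j - 1)
      = ∑ j ∈ Finset.range (l / 4 + 1),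
          (1 / 4 : ℝ) * ((l - 4 * j : ℕ) : ℝ) *
            ((c * (1 / (Nat.factorial j : ℝ)) * (l.descFactorial (4 * j) : ℝ)) *
              y ^ (l - 4 * j)) := by
    rw [Finset.mul_sum]
    refine Finset.sum_congr rfl fun j hj => ?_
    rcases Nat.eq_zero_or_pos (l - 4 * j) with h | h
    · simp [h]
    · have hp : y ^ (l - 4 * j) = y ^ (l - 4 * j - 1) * y := by
        rw [← pow_succ]; congr 1; omega
      rw [hp]; ring
  rw [hshift, hy, Finset.mul_sum, ← Finset.sum_neg_distrib, ← Finset.sum_sub_distrib]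
  refine Finset.sum_congr rfl fun j hj => ?_
  have h4j : 4 * j ≤ l := by
    have := Finset.mem_range.mp hj; omega
  rw [Nat.cast_sub h4j]
  push_cast
  ring
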